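/- (Finite-trace Reduction Theorem.) Let G = (V, E, x) and G' = (V', E', x') be topologies with k-tuples ḡ, ḡ' of pairwise distinct vertices and labelings Λ, Λ'. Assume that { List.destutter (· ≠ ·) [Λ(w₀), …, Λ(w_M)] : w₀ … w_M a walk in G from x } = { List.destutter (· ≠ ·) [Λ'(w'₀), …, Λ'(w'_{M'})] : w'₀ … w'_{M'} a walk in G' from x' }. Then for every process template P, { List.destutter (· ≠ ·) of the ḡ-projection trace of ρ : ρ a finite run of P^G } = { List.destutter (· ≠ ·) of the ḡ'-projection trace of ρ' : ρ' a finite run of P^{G'} }. -/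

import Mathlib

/-! Token-passing systems: process templates, topologies, the system `P^G`. -/

noncomputable def dst {α : Type} (l : List α) : List α :=
  @List.destutter α (· ≠ ·) (fun _ _ => Classical.dec _) l

-- auxiliary destutter lemmas
set_option linter.unusedSectionVars false

theorem getLast?_cons' {α : Type} (b : α) (l : List α) :
    (b :: l).getLast? = some (l.getLastD b) := by
  induction l generalizing b with
  | nil => rfl
  | cons h t ih => rw [List.getLast?_cons, ih h, List.getLastD_cons]; simp [List.getLastD]

section generic
variable {α : Type} {R : α → α → Prop} [inst : DecidableRel R]

theorem destutter'_head? (b : α) (l : List α) :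
    (List.destutter' R b l).head? = some b := by
  induction l generalizing b with
  | nil => rfl
  | cons h t ih =>
    by_cases hbh : R b h
    · rw [List.destutter'_cons_pos _ hbh]; rfl
    · rw [List.destutter'_cons_neg _ hbh]; exact ih b

variable (hR : ∀ a b : α, ¬ R a b → a = b)
include hR

theorem destutter'_getLast? (b : α) (l : List α) :
    (List.destutter' R b l).getLast? = some (l.getLastD b) := by
  induction l generalizing b with
  | nil => rfl
  | cons h t ih =>
    rw [List.getLastD_cons]
    by_cases hbh : R b h
    · rw [List.destutter'_cons_pos _ hbh, List.getLast?_cons, ih h]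
      simp [List.getLastD]
    · rw [List.destutter'_cons_neg _ hbh]
      obtain rfl := hR _ _ hbh
      exact ih b

theorem destutter'_snoc (l : List α) (b c : α) :
    List.destutter' R b (l ++ [c]) =
      if R (l.getLastD b) c then List.destutter' R b l ++ [c]
      else List.destutter' R b l := by
  induction l generalizing b with
  | nil =>
    simp only [List.nil_append, List.getLastD_nil, List.destutter'_singleton]
    split_ifs with hh <;> simp [hh]
  | cons h t ih =>
    rw [List.cons_append, List.getLastD_cons]
    by_cases hbh : R b h
    · rw [List.destutter'_cons_pos _ hbh, ih, List.destutter'_cons_pos _ hbh]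
      split_ifs <;> simp
    · obtain rfl := hR _ _ hbh
      rw [List.destutter'_cons_neg _ hbh, ih, List.destutter'_cons_neg _ hbh]

theorem destutter_getLast?' (l : List α) :
    (List.destutter R l).getLast? = l.getLast? := by
  cases l with
  | nil => rfl
  | cons b t => rw [List.destutter_cons', destutter'_getLast? hR, getLast?_cons']

theorem destutter_head?' (l : List α) :
    (List.destutter R l).head? = l.head? := by
  cases l with
  | nil => rfl
  | cons b t => rw [List.destutter_cons', destutter'_head?]; rfl

theorem destutter_snoc' (l : List α) (b c : α) (h : l.getLast? = some b) :
    List.destutter R (l ++ [c]) =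
      if R b c then List.destutter R l ++ [c] else List.destutter R l := by
  cases l with
  | nil => simp at h
  | cons x t =>
    rw [getLast?_cons'] at h
    rw [List.cons_append, List.destutter_cons', destutter'_snoc hR, List.destutter_cons',
      Option.some_inj.mp h]

theorem destutter_congr_snoc' {l₁ l₂ : List α}
    (h : List.destutter R l₁ = List.destutter R l₂) (c : α) :
    List.destutter R (l₁ ++ [c]) = List.destutter R (l₂ ++ [c]) := by
  rcases eq_or_ne l₁ [] with rfl | h1
  · have : l₂ = [] := (List.destutter_eq_nil _).mp (by rw [← h]; rfl)
    subst this; rfl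
  · have h2 : l₂ ≠ [] := by
      intro hh; subst hh
      have : List.destutter R l₁ = [] := by rw [h]; rfl
      exact h1 ((List.destutter_eq_nil _).mp this)
    obtain ⟨b, hb⟩ : ∃ b, l₁.getLast? = some b := by
      cases l₁ with | nil => exact absurd rfl h1 | cons x t => exact ⟨_, getLast?_cons' x t⟩
    have hb2 : l₂.getLast? = some b := by
      rw [← destutter_getLast?' hR, ← h, destutter_getLast?' hR, hb]
    rw [destutter_snoc' hR _ _ _ hb, destutter_snoc' hR _ _ _ hb2, h]

theorem destutter_prefix_snoc' (l : List α) (c : α) :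
    List.destutter R l <+: List.destutter R (l ++ [c]) := by
  rcases eq_or_ne l [] with rfl | h1
  · simp
  · obtain ⟨b, hb⟩ : ∃ b, l.getLast? = some b := by
      cases l with | nil => exact absurd rfl h1 | cons x t => exact ⟨_, getLast?_cons' x t⟩
    rw [destutter_snoc' hR _ _ _ hb]
    split_ifs
    · exact ⟨[c], rfl⟩
    · exact List.prefix_refl _

theorem destutter_prefix_mono' {l₁ l₂ : List α} (h : l₁ <+: l₂) :
    List.destutter R l₁ <+: List.destutter R l₂ := by
  obtain ⟨t, rfl⟩ := h
  induction t using List.reverseRecOn with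
  | nil => simp
  | append_singleton t c ih =>
    rw [← List.append_assoc]
    exact ih.trans (destutter_prefix_snoc' hR _ c)

end generic

noncomputable instance instDecNe {α : Type} : DecidableRel (α := α) (· ≠ ·) :=
  fun _ _ => Classical.dec _

theorem ne_hR {α : Type} : ∀ a b : α, ¬ a ≠ b → a = b := fun _ _ h => not_not.mp h

section dstlemmas
variable {α : Type}

theorem dst_getLast? (l : List α) : (dst l).getLast? = l.getLast? :=
  destutter_getLast?' (R := (· ≠ ·)) ne_hR l

theorem dst_head? (l : List α) : (dst l).head? = l.head? :=
  destutter_head?' (R := (· ≠ ·)) ne_hR l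

theorem dst_ne_nil {l : List α} (h : l ≠ []) : dst l ≠ [] := by
  intro hh
  exact h ((List.destutter_eq_nil (R := (· ≠ ·))).mp hh)

theorem dst_snoc_eq {l : List α} {c : α} (h : l.getLast? = some c) :
    dst (l ++ [c]) = dst l := by
  have := destutter_snoc' (R := (· ≠ ·)) ne_hR l c c h
  rw [if_neg (by simp)] at this
  exact this

theorem dst_snoc_ne {l : List α} {b c : α} (h : l.getLast? = some b) (hbc : b ≠ c) :
    dst (l ++ [c]) = dst l ++ [c] := by
  have := destutter_snoc' (R := (· ≠ ·)) ne_hR l b c h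
  rw [if_pos hbc] at this
  exact this

theorem dst_congr_snoc {l₁ l₂ : List α} (h : dst l₁ = dst l₂) (c : α) :
    dst (l₁ ++ [c]) = dst (l₂ ++ [c]) :=
  destutter_congr_snoc' (R := (· ≠ ·)) ne_hR h c

theorem dst_prefix_mono {l₁ l₂ : List α} (h : l₁ <+: l₂) : dst l₁ <+: dst l₂ :=
  destutter_prefix_mono' (R := (· ≠ ·)) ne_hR h


/-- A topology: a finite nonempty directed graph with no self-loops. -/
structure Topo where
  V : Type
  fintypeV : Fintype V
  decEqV : DecidableEq V
  nonemptyV : Nonempty V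
  E : V → V → Prop
  no_self_loops : ∀ v, ¬ E v v

attribute [instance] Topo.fintypeV Topo.decEqV Topo.nonemptyV

/-- Actions of a process: internal actions from `A = Σint`, plus `snd`, `rcv`. -/
inductive Act (A : Type) where
  | int : A → Act A
  | snd : Act A
  | rcv : Act A

/-- A process template `P = (Q, δ, tok, ιt, ιn)`.  The field `alternation`
encodes that every infinite action-labeled path of `P` lies in
`(Σint* snd Σint* rcv)^ω ∪ (Σint* rcv Σint* snd)^ω`: every infinite path has
infinitely many non-internal actions, between any two `snd`s there is a `rcv`,
and between any two `rcv`s there is a `snd`. -/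
structure ProcTemplate (A : Type) where
  Q : Type
  fintypeQ : Fintype Q
  decEqQ : DecidableEq Q
  tok : Q → Prop
  iotaT : Q
  iotaN : Q
  tok_iotaT : tok iotaT
  not_tok_iotaN : ¬ tok iotaN
  δ : Q → Act A → Q → Prop
  snd_tok : ∀ {q q'}, δ q Act.snd q' → tok q ∧ ¬ tok q'
  rcv_tok : ∀ {q q'}, δ q Act.rcv q' → ¬ tok q ∧ tok q'
  int_tok : ∀ {q a q'}, δ q (Act.int a) q' → (tok q ↔ tok q')
  total : ∀ q, ∃ σ q', δ q σ q'
  alternation : ∀ (q : ℕ → Q) (a : ℕ → Act A),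
    (∀ t, δ (q t) (a t) (q (t + 1))) →
      (∀ t, ∃ t', t ≤ t' ∧ (a t' = Act.snd ∨ a t' = Act.rcv)) ∧
      (∀ t₁ t₂, t₁ < t₂ → a t₁ = Act.snd → a t₂ = Act.snd →
        ∃ t, t₁ < t ∧ t < t₂ ∧ a t = Act.rcv) ∧
      (∀ t₁ t₂, t₁ < t₂ → a t₁ = Act.rcv → a t₂ = Act.rcv →
        ∃ t, t₁ < t ∧ t < t₂ ∧ a t = Act.snd)

attribute [instance] ProcTemplate.fintypeQ ProcTemplate.decEqQ

/-- The initial global state of `P^G` with initial vertex `x`. -/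
def gInit {A : Type} (P : ProcTemplate A) (G : Topo) (x : G.V) : G.V → P.Q :=
  fun v => if v = x then P.iotaT else P.iotaN

/-- Internal transitions of `P^G`: one process moves via an internal action. -/
def IntTrans {A : Type} (P : ProcTemplate A) (G : Topo) (s s' : G.V → P.Q) : Prop :=
  ∃ v a, P.δ (s v) (Act.int a) (s' v) ∧ ∀ w, w ≠ v → s' w = s w

/-- Token-passing transitions of `P^G`: a process sends the token to another
along an edge of `G`. -/
def TokTrans {A : Type} (P : ProcTemplate A) (G : Topo) (s s' : G.V → P.Q) : Prop :=
  ∃ v w, G.E v w ∧ P.δ (s v) Act.snd (s' v) ∧ P.δ (s w) Act.rcv (s' w) ∧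
    ∀ u, u ≠ v → u ≠ w → s' u = s u

/-- Global transitions of `P^G`. -/
def GStep {A : Type} (P : ProcTemplate A) (G : Topo) (s s' : G.V → P.Q) : Prop :=
  IntTrans P G s s' ∨ TokTrans P G s s'

/-- A finite run of `P^G` (as a nonempty list of global states starting at the
initial state, consecutive states related by transitions). -/
def IsFinRun {A : Type} (P : ProcTemplate A) (G : Topo) (x : G.V)
    (ρ : List (G.V → P.Q)) : Prop :=
  ρ ≠ [] ∧ ρ.head? = some (gInit P G x) ∧ List.Chain' (GStep P G) ρ

/-- A walk in `G` from `x`: a nonempty list of vertices starting at `x` with an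
edge between consecutive entries. -/
def IsWalkFrom (G : Topo) (x : G.V) (w : List G.V) : Prop :=
  w ≠ [] ∧ w.head? = some x ∧ List.Chain' G.E w

/-- The labeling `Λ` induced by a marked `k`-tuple `g`. -/
def lab {k : ℕ} (G : Topo) (g : Fin k → G.V) (v : G.V) : Finset (Fin k) :=
  Finset.univ.filter fun i => g i = v

/-- The `ḡ`-projection trace of a finite run: the list of `k`-tuples of local
states of the processes at the marked vertices. -/
def projTrace {A : Type} {k : ℕ} (P : ProcTemplate A) (G : Topo)
    (g : Fin k → G.V) (ρ : List (G.V → P.Q)) : List (Fin k → P.Q) :=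
  ρ.map fun s i => s (g i)

/-! ### Auxiliary machinery: internal reachability, runs-with-walks -/

section Machinery

variable {A : Type} (P : ProcTemplate A)

/-- One internal step of the template. -/
def IntStep : P.Q → P.Q → Prop := fun q q' => ∃ a, P.δ q (Act.int a) q'

/-- Reachability by internal steps. -/
def IntReach : P.Q → P.Q → Prop := Relation.ReflTransGen (IntStep P)

theorem IntReach_tok {q q' : P.Q} (h : IntReach P q q') : P.tok q ↔ P.tok q' := by
  induction h with
  | refl => exact Iff.rfl
  | tail _ step ih => obtain ⟨a, hd⟩ := step; exact ih.trans (P.int_tok hd)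

theorem tps_exists_comm (q : P.Q) :
    ∃ q₁ σ q₂, IntReach P q q₁ ∧ P.δ q₁ σ q₂ ∧ (σ = Act.snd ∨ σ = Act.rcv) := by
  by_contra hcon
  push_neg at hcon
  have step : ∀ q₁ : {q₁ // IntReach P q q₁}, ∃ p : A × P.Q, P.δ q₁.1 (Act.int p.1) p.2 := by
    rintro ⟨q₁, hq₁⟩
    obtain ⟨σ, q₂, hδ⟩ := P.total q₁
    cases σ with
    | int a => exact ⟨(a, q₂), hδ⟩
    | snd => exact absurd rfl (hcon q₁ Act.snd q₂ hq₁ hδ).1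
    | rcv => exact absurd rfl (hcon q₁ Act.rcv q₂ hq₁ hδ).2
  choose f hf using step
  let nxt : {q₁ // IntReach P q q₁} → {q₁ // IntReach P q q₁} :=
    fun t => ⟨(f t).2, t.2.tail ⟨(f t).1, hf t⟩⟩
  let seq : ℕ → {q₁ // IntReach P q q₁} := fun n => nxt^[n] ⟨q, Relation.ReflTransGen.refl⟩
  have hseq : ∀ n, seq (n + 1) = nxt (seq n) := fun n => Function.iterate_succ_apply' nxt n _
  have hδseq : ∀ n, P.δ ((seq n).1) (Act.int ((f (seq n)).1)) ((seq (n + 1)).1) := by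
    intro n; rw [hseq]; exact hf (seq n)
  obtain ⟨h1, -, -⟩ := P.alternation (fun n => (seq n).1) (fun n => Act.int ((f (seq n)).1)) hδseq
  obtain ⟨t', -, h⟩ := h1 0
  rcases h with h | h <;> cases h

theorem can_snd {q : P.Q} (h : P.tok q) :
    ∃ q₁ q₂, IntReach P q q₁ ∧ P.δ q₁ Act.snd q₂ := by
  obtain ⟨q₁, σ, q₂, hre, hδ, hσ⟩ := tps_exists_comm P q
  rcases hσ with rfl | rfl
  · exact ⟨q₁, q₂, hre, hδ⟩
  · exact absurd ((IntReach_tok P hre).mp h) (P.rcv_tok hδ).1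

theorem can_rcv {q : P.Q} (h : ¬ P.tok q) :
    ∃ q₁ q₂, IntReach P q q₁ ∧ P.δ q₁ Act.rcv q₂ := by
  obtain ⟨q₁, σ, q₂, hre, hδ, hσ⟩ := tps_exists_comm P q
  rcases hσ with rfl | rfl
  · exact absurd ((IntReach_tok P hre).mpr (P.snd_tok hδ).1) h
  · exact ⟨q₁, q₂, hre, hδ⟩

variable (G : Topo) (x : G.V)

/-- Runs together with the walk traced by the token. -/
inductive RW : (G.V → P.Q) → G.V → List (G.V → P.Q) → List G.V → Prop
  | base : RW (gInit P G x) x [gInit P G x] [x]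
  | int {s : G.V → P.Q} {v ρ w} (z : G.V) (a : A) (r : P.Q) :
      RW s v ρ w → P.δ (s z) (Act.int a) r →
      RW (Function.update s z r) v (ρ ++ [Function.update s z r]) w
  | tok {s : G.V → P.Q} {v ρ w} (u : G.V) (qv qu : P.Q) :
      RW s v ρ w → G.E v u → P.δ (s v) Act.snd qv → P.δ (s u) Act.rcv qu →
      RW (Function.update (Function.update s v qv) u qu) u
        (ρ ++ [Function.update (Function.update s v qv) u qu]) (w ++ [u])

variable {P G x}

theorem RW_last {s v ρ w} (h : RW P G x s v ρ w) : ρ.getLast? = some s := by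
  cases h with
  | base => rfl
  | int z a r h hδ => exact List.getLast?_concat
  | tok u qv qu h hE hs hr => exact List.getLast?_concat

theorem RW_walk_last {s v ρ w} (h : RW P G x s v ρ w) : w.getLast? = some v := by
  induction h with
  | base => rfl
  | int z a r h hδ ih => exact ih
  | tok u qv qu h hE hs hr ih => exact List.getLast?_concat

theorem RW_ne_nil {s v ρ w} (h : RW P G x s v ρ w) : ρ ≠ [] := by
  intro hh
  have := RW_last h
  rw [hh] at this
  simp at this

theorem RW_walk_ne_nil {s v ρ w} (h : RW P G x s v ρ w) : w ≠ [] := by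
  intro hh
  have := RW_walk_last h
  rw [hh] at this
  simp at this

theorem RW_tok_inv {s v ρ w} (h : RW P G x s v ρ w) : ∀ u, P.tok (s u) ↔ u = v := by
  induction h with
  | base =>
    intro u
    unfold gInit
    by_cases hu : u = x
    · subst hu; rw [if_pos rfl]; exact ⟨fun _ => rfl, fun _ => P.tok_iotaT⟩
    · simp only [if_neg hu]
      exact ⟨fun hh => absurd hh P.not_tok_iotaN, fun hh => absurd hh hu⟩
  | int z a r h hδ ih =>
    intro u
    by_cases hu : u = z
    · subst hu
      rw [Function.update_self]
      exact (P.int_tok hδ).symm.trans (ih u)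
    · rw [Function.update_of_ne hu]
      exact ih u
  | tok u₀ qv qu h hE hs hr ih =>
    rename_i s0 v0 ρ0 w0
    intro u
    have hvu : v0 ≠ u₀ := fun hh => G.no_self_loops u₀ (hh ▸ hE)
    by_cases hu : u = u₀
    · subst hu
      rw [Function.update_self]
      exact ⟨fun _ => rfl, fun _ => (P.rcv_tok hr).2⟩
    · rw [Function.update_of_ne hu]
      by_cases hv : u = v0
      · subst hv
        rw [Function.update_self]
        exact ⟨fun hh => absurd hh (P.snd_tok hs).2, fun hh => absurd hh hu⟩
      · rw [Function.update_of_ne hv]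
        exact (ih u).trans ⟨fun hh => absurd hh hv, fun hh => absurd hh hu⟩

theorem RW_run {s v ρ w} (h : RW P G x s v ρ w) : IsFinRun P G x ρ := by
  induction h with
  | base => exact ⟨List.cons_ne_nil _ _, rfl, List.isChain_singleton _⟩
  | int z a r h hδ ih =>
    obtain ⟨hne, hhead, hchain⟩ := ih
    refine ⟨by simp, ?_, ?_⟩
    · rw [List.head?_append, hhead]; rfl
    · unfold List.Chain'; rw [List.isChain_append]
      refine ⟨hchain, List.isChain_singleton _, ?_⟩
      intro y hy z' hz'
      rw [RW_last h] at hy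
      cases hy
      cases hz'
      refine Or.inl ⟨z, a, ?_, fun w' hw' => Function.update_of_ne hw' _ _⟩
      rw [Function.update_self]
      exact hδ
  | tok u qv qu h hE hs hr ih =>
    obtain ⟨hne, hhead, hchain⟩ := ih
    rename_i s0 v0 ρ0 w0
    have hvu : v0 ≠ u := fun hh => G.no_self_loops u (hh ▸ hE)
    refine ⟨by simp, ?_, ?_⟩
    · rw [List.head?_append, hhead]; rfl
    · unfold List.Chain'; rw [List.isChain_append]
      refine ⟨hchain, List.isChain_singleton _, ?_⟩
      intro y hy z' hz'
      rw [RW_last h] at hy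
      cases hy
      cases hz'
      refine Or.inr ⟨v0, u, hE, ?_, ?_, fun y hyv hyu => ?_⟩
      · rw [Function.update_of_ne hvu, Function.update_self]; exact hs
      · rw [Function.update_self]; exact hr
      · rw [Function.update_of_ne hyu, Function.update_of_ne hyv]

theorem RW_walk {s v ρ w} (h : RW P G x s v ρ w) : IsWalkFrom G x w := by
  induction h with
  | base => exact ⟨List.cons_ne_nil _ _, rfl, List.isChain_singleton _⟩
  | int z a r h hδ ih => exact ih
  | tok u qv qu h hE hs hr ih =>
    obtain ⟨hne, hhead, hchain⟩ := ih
    refine ⟨by simp [hne], ?_, ?_⟩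
    · rw [List.head?_append, hhead]; rfl
    · unfold List.Chain'; rw [List.isChain_append]
      refine ⟨hchain, List.isChain_singleton _, ?_⟩
      intro y hy z' hz'
      rw [RW_walk_last h] at hy
      cases hy
      cases hz'
      exact hE

theorem run_to_RW {ρ : List (G.V → P.Q)} (h : IsFinRun P G x ρ) :
    ∃ s v w, RW P G x s v ρ w := by
  induction ρ using List.reverseRecOn with
  | nil => exact absurd rfl h.1
  | append_singleton l a ih =>
    rcases eq_or_ne l [] with rfl | hl
    · obtain ⟨-, hhead, -⟩ := h
      simp only [List.nil_append, List.head?_cons, Option.some_inj] at hhead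
      subst hhead
      exact ⟨_, _, _, RW.base⟩
    · obtain ⟨-, hhead, hchain⟩ := h
      have hfin : IsFinRun P G x l := by
        refine ⟨hl, ?_, hchain.prefix ⟨[a], rfl⟩⟩
        rw [List.head?_append] at hhead
        cases l with
        | nil => exact absurd rfl hl
        | cons b t => exact hhead
      obtain ⟨s, v, w, hrw⟩ := ih hfin
      have hstep : GStep P G s a := by
        unfold List.Chain' at hchain; rw [List.isChain_append] at hchain
        exact hchain.2.2 s (RW_last hrw) a rfl
      cases hstep with
      | inl hint =>
        obtain ⟨z, a', hδ, hre⟩ := hint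
        have ha : a = Function.update s z (a z) := by
          funext y
          by_cases hy : y = z
          · subst hy; rw [Function.update_self]
          · rw [Function.update_of_ne hy]; exact hre y hy
        rw [ha]
        exact ⟨_, v, w, RW.int z a' (a z) hrw (ha ▸ hδ)⟩
      | inr htok =>
        obtain ⟨v₀, u, hE, hsnd, hrcv, hre⟩ := htok
        have hv₀ : v₀ = v := (RW_tok_inv hrw v₀).mp (P.snd_tok hsnd).1
        subst hv₀
        have hvu : v₀ ≠ u := fun hh => G.no_self_loops u (hh ▸ hE)
        have ha : a = Function.update (Function.update s v₀ (a v₀)) u (a u) := by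
          funext y
          by_cases hy : y = u
          · subst hy; rw [Function.update_self]
          · rw [Function.update_of_ne hy]
            by_cases hyv : y = v₀
            · subst hyv; rw [Function.update_self]
            · rw [Function.update_of_ne hyv]; exact hre y hyv hy
        rw [ha]
        exact ⟨_, u, w ++ [u], RW.tok u (a v₀) (a u) hrw hE hsnd hrcv⟩

end Machinery


section LabLemmas

variable {k : ℕ} {G : Topo}

theorem mem_lab (g : Fin k → G.V) (i : Fin k) (v : G.V) : i ∈ lab G g v ↔ g i = v := by
  simp [lab]

theorem lab_eq_empty_iff (g : Fin k → G.V) (v : G.V) : lab G g v = ∅ ↔ ∀ i, g i ≠ v := by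
  simp [lab, Finset.filter_eq_empty_iff]

theorem lab_cases {g : Fin k → G.V} (hg : Function.Injective g) (v : G.V) :
    lab G g v = ∅ ∨ ∃ i, g i = v ∧ lab G g v = {i} := by
  by_cases hv : ∃ i, g i = v
  · obtain ⟨i, hi⟩ := hv
    refine Or.inr ⟨i, hi, ?_⟩
    ext j
    simp only [mem_lab, Finset.mem_singleton]
    exact ⟨fun hj => hg (hj.trans hi.symm), fun hj => hj ▸ hi⟩
  · push_neg at hv
    exact Or.inl ((lab_eq_empty_iff g v).mpr hv)

theorem lab_eq_singleton_imp {g : Fin k → G.V} {v : G.V} {i : Fin k}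
    (h : lab G g v = {i}) : g i = v :=
  (mem_lab g i v).mp (h ▸ Finset.mem_singleton_self i)

theorem lab_transfer {G' : Topo} {g : Fin k → G.V} {g' : Fin k → G'.V} {v : G.V} {v' : G'.V}
    (h : lab G g v = lab G' g' v') (i : Fin k) : g i = v ↔ g' i = v' := by
  rw [← mem_lab g i v, ← mem_lab g' i v', h]

end LabLemmas

section ProjLemmas

variable {A : Type} {k : ℕ} {P : ProcTemplate A} {G : Topo}

theorem projTrace_append (g : Fin k → G.V) (ρ : List (G.V → P.Q)) (s : G.V → P.Q) :
    projTrace P G g (ρ ++ [s]) = projTrace P G g ρ ++ [fun i => s (g i)] := by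
  simp [projTrace]

theorem projTrace_getLast? (g : Fin k → G.V) {ρ : List (G.V → P.Q)} {s : G.V → P.Q}
    (h : ρ.getLast? = some s) :
    (projTrace P G g ρ).getLast? = some (fun i => s (g i)) := by
  rw [projTrace, List.getLast?_map, h]; rfl

variable {x : G.V}

/-- Extend a run by internal steps at an unmarked vertex: destuttered
projection unchanged. -/
theorem RW_int_extend (g : Fin k → G.V) {s : G.V → P.Q} {v : G.V} {ρ w}
    (h : RW P G x s v ρ w) (u : G.V) (hu : ∀ i, g i ≠ u)
    {r : P.Q} (hr : IntReach P (s u) r) :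
    ∃ ρ', RW P G x (Function.update s u r) v ρ' w ∧
      dst (projTrace P G g ρ') = dst (projTrace P G g ρ) := by
  induction hr with
  | refl => exact ⟨ρ, by rwa [Function.update_eq_self], rfl⟩
  | @tail b c hab hbc ih =>
    obtain ⟨ρ', hrw', hdst'⟩ := ih
    obtain ⟨a, hδ⟩ := hbc
    have h2 : P.δ ((Function.update s u b) u) (Act.int a) c := by
      rw [Function.update_self]; exact hδ
    have hrw2 := RW.int u a c hrw' h2
    rw [Function.update_idem] at hrw2
    refine ⟨_, hrw2, ?_⟩
    have hpl : (projTrace P G g ρ').getLast? = some (fun i => Function.update s u c (g i)) := by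
      rw [projTrace_getLast? g (RW_last hrw')]
      congr 1
      funext i
      rw [Function.update_of_ne (hu i), Function.update_of_ne (hu i)]
    rw [projTrace_append, dst_snoc_eq hpl, hdst']

theorem walk_edge {w : List G.V} (h : IsWalkFrom G x w)
    {m : ℕ} (hm : m + 1 < w.length) : G.E w[m] w[m + 1] := by
  have := List.isChain_iff_getElem.mp h.2.2 m (by omega)
  simpa using this

end ProjLemmas


section Transport

variable {A : Type} {k : ℕ} {P : ProcTemplate A} {G' : Topo} {x' : G'.V}

/-- Transport the token from an unmarked vertex along the walk `w'` (through
unmarked vertices) until it reaches the marked vertex `g' j`, receiving there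
with the prescribed transition. -/
theorem transport {g' : Fin k → G'.V} (hg' : Function.Injective g')
    {w' : List G'.V} (hw' : IsWalkFrom G' x' w') {D : List (Finset (Fin k))}
    {j : Fin k} {qj qu : P.Q} (hrcv : P.δ qj Act.rcv qu)
    (hpre : D ++ [{j}] <+: dst (w'.map (lab G' g'))) :
    ∀ n m (s' : G'.V → P.Q) (v' : G'.V) ρ', w'.length - m ≤ n →
      RW P G' x' s' v' ρ' (w'.take m) → 1 ≤ m → m ≤ w'.length →
      w'[m - 1]? = some v' → lab G' g' v' = ∅ →
      dst ((w'.take m).map (lab G' g')) = D →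
      s' (g' j) = qj →
      ∃ p s'' ρ'', RW P G' x' s'' (g' j) ρ'' (w'.take p) ∧ 1 ≤ p ∧ p ≤ w'.length ∧
        w'[p - 1]? = some (g' j) ∧
        dst ((w'.take p).map (lab G' g')) = D ++ [{j}] ∧
        dst (projTrace P G' g' ρ'') =
          dst (projTrace P G' g' ρ' ++ [fun i => s'' (g' i)]) ∧
        (∀ i, s'' (g' i) = if i = j then qu else s' (g' i)) := by
  intro n
  induction n with
  | zero =>
    intro m s' v' ρ' hn hrw hm1 hm2 hv' hlabv' hD hsj
    exfalso
    have hm : m = w'.length := by omega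
    rw [hm, List.take_length] at hD
    have := hpre.length_le
    rw [← hD] at this
    simp at this
  | succ n ih =>
    intro m s' v' ρ' hn hrw hm1 hm2 hv' hlabv' hD hsj
    obtain ⟨m₀, rfl⟩ : ∃ m₀, m = m₀ + 1 := ⟨m - 1, by omega⟩
    simp only [Nat.add_sub_cancel] at hv'
    have hmlt : m₀ + 1 < w'.length := by
      rcases lt_or_eq_of_le hm2 with h | h
      · exact h
      · exfalso
        rw [h, List.take_length] at hD
        have := hpre.length_le
        rw [← hD] at this
        simp at this
    set u' := w'[m₀ + 1] with hu'def
    have hv'get : w'[m₀] = v' := by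
      have hlt : m₀ < w'.length := by omega
      rw [List.getElem?_eq_getElem hlt] at hv'
      exact Option.some_inj.mp hv'
    have hedge : G'.E v' u' := by
      have := walk_edge hw' (m := m₀) hmlt
      rwa [hv'get] at this
    have hvu' : v' ≠ u' := fun hh => G'.no_self_loops u' (hh ▸ hedge)
    have htake : w'.take (m₀ + 1 + 1) = w'.take (m₀ + 1) ++ [u'] := by
      rw [← List.take_concat_get hmlt, List.concat_eq_append]
    have hlastlab :
        ((w'.take (m₀ + 1)).map (lab G' g')).getLast? = some (lab G' g' v') := by
      rw [List.getLast?_map, RW_walk_last hrw]; rfl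
    have htok_v' : P.tok (s' v') := (RW_tok_inv hrw v').mpr rfl
    have hmapsnoc : (w'.take (m₀ + 1 + 1)).map (lab G' g') =
        (w'.take (m₀ + 1)).map (lab G' g') ++ [lab G' g' u'] := by
      rw [htake]; simp
    by_cases heq : lab G' g' u' = ∅
    · -- intermediate unmarked vertex: hop and recurse
      have hD1 : dst ((w'.take (m₀ + 1 + 1)).map (lab G' g')) = D := by
        rw [hmapsnoc, heq, dst_snoc_eq (by rw [hlastlab, hlabv']), hD]
      obtain ⟨h₁, h₂, hreS, hsnd⟩ := can_snd P htok_v'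
      have hunmv' : ∀ i, g' i ≠ v' := (lab_eq_empty_iff g' v').mp hlabv'
      have hunmu' : ∀ i, g' i ≠ u' := (lab_eq_empty_iff g' u').mp heq
      obtain ⟨ρ₂, hrw₂, hdst₂⟩ := RW_int_extend g' hrw v' hunmv' hreS
      set s₂ := Function.update s' v' h₁ with hs₂
      have hntok : ¬ P.tok (s₂ u') := by
        rw [RW_tok_inv hrw₂ u']
        exact fun hh => hvu' hh.symm
      obtain ⟨r₁, r₂, hreR, hrcvu⟩ := can_rcv P hntok
      obtain ⟨ρ₃, hrw₃, hdst₃⟩ := RW_int_extend g' hrw₂ u' hunmu' hreR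
      set s₃ := Function.update s₂ u' r₁ with hs₃
      have hsnd' : P.δ (s₃ v') Act.snd h₂ := by
        rw [hs₃, Function.update_of_ne hvu', hs₂, Function.update_self]; exact hsnd
      have hrcv' : P.δ (s₃ u') Act.rcv r₂ := by
        rw [hs₃, Function.update_self]; exact hrcvu
      have hrw₄ := RW.tok u' h₂ r₂ hrw₃ hedge hsnd' hrcv'
      rw [← htake] at hrw₄
      set s₄ := Function.update (Function.update s₃ v' h₂) u' r₂ with hs₄
      have hmark₄ : ∀ i, s₄ (g' i) = s' (g' i) := by
        intro i
        rw [hs₄, Function.update_of_ne (hunmu' i), Function.update_of_ne (hunmv' i),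
          hs₃, Function.update_of_ne (hunmu' i), hs₂, Function.update_of_ne (hunmv' i)]
      have hdst₄ : dst (projTrace P G' g' (ρ₃ ++ [s₄])) = dst (projTrace P G' g' ρ') := by
        rw [projTrace_append]
        have hpl : (projTrace P G' g' ρ₃).getLast? = some (fun i => s₄ (g' i)) := by
          rw [projTrace_getLast? g' (RW_last hrw₃)]
          congr 1
          funext i
          rw [hmark₄ i, hs₃, Function.update_of_ne (hunmu' i), hs₂,
            Function.update_of_ne (hunmv' i)]
        rw [dst_snoc_eq hpl, hdst₃, hdst₂]
      have hrec := ih (m₀ + 1 + 1) s₄ u' (ρ₃ ++ [s₄]) (by omega) hrw₄ (by omega) (by omega)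
        (by simp only [Nat.add_sub_cancel]; exact List.getElem?_eq_getElem hmlt) heq hD1
        (by rw [hmark₄ j]; exact hsj)
      obtain ⟨p, s'', ρ'', hA, hB, hC, hDd, hE', hF, hG⟩ := hrec
      refine ⟨p, s'', ρ'', hA, hB, hC, hDd, hE', ?_, ?_⟩
      · rw [hF, dst_congr_snoc hdst₄ (fun i => s'' (g' i))]
      · intro i
        rw [hG i, hmark₄ i]
    · -- u' is the marked vertex g' j: final hop
      have hne' : lab G' g' u' ≠ lab G' g' v' := by rw [hlabv']; exact heq
      have hD1 : dst ((w'.take (m₀ + 1 + 1)).map (lab G' g')) = D ++ [lab G' g' u'] := by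
        rw [hmapsnoc, dst_snoc_ne hlastlab (fun hh => hne' hh.symm), hD]
      have hprefix1 : D ++ [lab G' g' u'] <+: dst (w'.map (lab G' g')) := by
        rw [← hD1]
        apply dst_prefix_mono
        rw [List.map_take]
        exact List.take_prefix _ _
      have hlab_u' : lab G' g' u' = {j} := by
        have h1 := List.prefix_iff_eq_take.mp hprefix1
        have h2 := List.prefix_iff_eq_take.mp hpre
        have hlen : (D ++ [lab G' g' u']).length = (D ++ [({j} : Finset (Fin k))]).length := by
          simp
        rw [hlen] at h1
        have h3 : D ++ [lab G' g' u'] = D ++ [({j} : Finset (Fin k))] := h1.trans h2.symm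
        have h4 := List.append_cancel_left h3
        injection h4 with h5 _
      have hu'gj : u' = g' j := (lab_eq_singleton_imp hlab_u').symm
      obtain ⟨h₁, h₂, hreS, hsnd⟩ := can_snd P htok_v'
      have hunmv' : ∀ i, g' i ≠ v' := (lab_eq_empty_iff g' v').mp hlabv'
      obtain ⟨ρ₂, hrw₂, hdst₂⟩ := RW_int_extend g' hrw v' hunmv' hreS
      set s₂ := Function.update s' v' h₁ with hs₂
      have hsnd' : P.δ (s₂ v') Act.snd h₂ := by
        rw [hs₂, Function.update_self]; exact hsnd
      have hrcv' : P.δ (s₂ u') Act.rcv qu := by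
        rw [hs₂, Function.update_of_ne (fun hh => hvu' hh.symm), hu'gj, hsj]
        exact hrcv
      have hrw₃ := RW.tok u' h₂ qu hrw₂ hedge hsnd' hrcv'
      rw [← htake] at hrw₃
      set s₃ := Function.update (Function.update s₂ v' h₂) u' qu with hs₃
      have hmark₃ : ∀ i, s₃ (g' i) = if i = j then qu else s' (g' i) := by
        intro i
        by_cases hij : i = j
        · subst hij
          rw [hs₃, if_pos rfl, ← hu'gj, Function.update_self]
        · rw [hs₃, if_neg hij]
          have hgu : g' i ≠ u' := by
            rw [hu'gj]; exact fun hh => hij (hg' hh)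
          rw [Function.update_of_ne hgu, Function.update_of_ne (hunmv' i), hs₂,
            Function.update_of_ne (hunmv' i)]
      rw [hu'gj] at hrw₃
      refine ⟨m₀ + 1 + 1, s₃, ρ₂ ++ [s₃], hrw₃, by omega, by omega, ?_, ?_, ?_, hmark₃⟩
      · simp only [Nat.add_sub_cancel]
        exact (List.getElem?_eq_getElem hmlt).trans (congrArg some hu'gj)
      · rw [hD1, hlab_u']
      · rw [projTrace_append]
        exact dst_congr_snoc hdst₂ _

end Transport


theorem prefix_last_eq {α : Type} {D : List α} {a b : α} {X : List α}
    (h1 : D ++ [a] <+: X) (h2 : D ++ [b] <+: X) : a = b := by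
  have l1 := List.prefix_iff_eq_take.mp h1
  have l2 := List.prefix_iff_eq_take.mp h2
  have hlen : (D ++ [a]).length = (D ++ [b]).length := by simp
  rw [hlen] at l1
  have h3 : D ++ [a] = D ++ [b] := l1.trans l2.symm
  have h4 := List.append_cancel_left h3
  injection h4 with h5 _

theorem lab_apply {k : ℕ} {G : Topo} {g : Fin k → G.V} (hg : Function.Injective g)
    (j : Fin k) : lab G g (g j) = {j} := by
  ext i
  simp only [mem_lab, Finset.mem_singleton]
  exact ⟨fun hh => hg hh, fun hh => hh ▸ rfl⟩

section Simulate

variable {A : Type} {k : ℕ} {P : ProcTemplate A} {G G' : Topo} {x : G.V} {x' : G'.V}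

/-- The main simulation lemma: a run of `P^G` whose token walk destutters to a
prefix of the destuttered labels of the walk `w'` of `G'` can be simulated in
`P^{G'}` along `w'` with the same destuttered projection trace. -/
theorem simulate {g : Fin k → G.V} (hg : Function.Injective g)
    {g' : Fin k → G'.V} (hg' : Function.Injective g')
    (hxx' : lab G g x = lab G' g' x')
    {w' : List G'.V} (hw' : IsWalkFrom G' x' w')
    {s : G.V → P.Q} {v : G.V} {ρ w} (h : RW P G x s v ρ w) :
    dst (w.map (lab G g)) <+: dst (w'.map (lab G' g')) →
    ∃ m s' v' ρ', RW P G' x' s' v' ρ' (w'.take m) ∧ 1 ≤ m ∧ m ≤ w'.length ∧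
      w'[m - 1]? = some v' ∧
      dst ((w'.take m).map (lab G' g')) = dst (w.map (lab G g)) ∧
      dst (projTrace P G' g' ρ') = dst (projTrace P G g ρ) ∧
      lab G g v = lab G' g' v' ∧ (∀ i, s (g i) = s' (g' i)) := by
  induction h with
  | base =>
    intro _
    obtain ⟨hne', hhead', hchain'⟩ := hw'
    cases w' with
    | nil => exact absurd rfl hne'
    | cons y t =>
      have hy : x' = y := by
        rw [List.head?_cons, Option.some_inj] at hhead'
        exact hhead'.symm
      obtain rfl := hy
      have hinit : (fun i => gInit P G' x' (g' i)) = fun i => gInit P G x (g i) := by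
        funext i
        unfold gInit
        by_cases hxi : g i = x
        · rw [if_pos hxi, if_pos ((lab_transfer hxx' i).mp hxi)]
        · rw [if_neg hxi, if_neg (fun hh => hxi ((lab_transfer hxx' i).mpr hh))]
      refine ⟨1, gInit P G' x', x', [gInit P G' x'], ?_, le_refl 1, by simp, by simp,
        ?_, ?_, hxx', fun i => (congrFun hinit i).symm⟩
      · have : (x' :: t).take 1 = [x'] := by simp
        rw [this]
        exact RW.base
      · have h1 : (x' :: t).take 1 = [x'] := by simp
        rw [h1]
        simp only [List.map_cons, List.map_nil]
        rw [hxx']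
      · simp only [projTrace, List.map_cons, List.map_nil]
        rw [hinit]
  | int z a r h hδ ih =>
    rename_i s v ρ w
    intro hpre
    obtain ⟨m, s', v', ρ', hrw', hm1, hm2, hv', hDlab, hdstp, hlabv, hstate⟩ := ih hpre
    rcases lab_cases hg z with hze | ⟨i, hgi, hzi⟩
    · -- internal step at an unmarked vertex: nothing to do in G'
      have hne : ∀ i, g i ≠ z := (lab_eq_empty_iff g z).mp hze
      refine ⟨m, s', v', ρ', hrw', hm1, hm2, hv', hDlab, ?_, hlabv, ?_⟩
      · rw [projTrace_append]
        have hplast : (projTrace P G g ρ).getLast? =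
            some (fun i => Function.update s z r (g i)) := by
          rw [projTrace_getLast? g (RW_last h)]
          congr 1
          funext i
          rw [Function.update_of_ne (hne i)]
        rw [dst_snoc_eq hplast]
        exact hdstp
      · intro i
        rw [Function.update_of_ne (hne i)]
        exact hstate i
    · -- internal step at marked vertex g i: mirror it at g' i
      have hδ' : P.δ (s' (g' i)) (Act.int a) r := by
        rw [← hstate i, hgi]; exact hδ
      have hrw'' := RW.int (g' i) a r hrw' hδ'
      have hfeq : (fun i' => Function.update s' (g' i) r (g' i')) =
          (fun i' => Function.update s z r (g i')) := by
        funext i'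
        by_cases hii : i' = i
        · subst hii
          rw [Function.update_self, ← hgi, Function.update_self]
        · rw [Function.update_of_ne (fun hh => hii (hg' hh)),
            Function.update_of_ne (fun hh : g i' = z => hii (hg (hh.trans hgi.symm)))]
          exact (hstate i').symm
      refine ⟨m, Function.update s' (g' i) r, v', _, hrw'', hm1, hm2, hv', hDlab, ?_,
        hlabv, ?_⟩
      · rw [projTrace_append, projTrace_append, hfeq]
        exact dst_congr_snoc hdstp _
      · intro i'
        by_cases hii : i' = i
        · subst hii
          rw [← hgi, Function.update_self, Function.update_self]
        · rw [Function.update_of_ne (fun hh => hii (hg' hh)),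
            Function.update_of_ne (fun hh : g i' = z => hii (hg (hh.trans hgi.symm)))]
          exact hstate i'
  | tok u qv qu h hE hsnd hrcv ih =>
    rename_i s v ρ w
    intro hpre
    have hvu : v ≠ u := fun hh => G.no_self_loops u (hh ▸ hE)
    have hmapw : (w ++ [u]).map (lab G g) = w.map (lab G g) ++ [lab G g u] := by simp
    have hpre₀ : dst (w.map (lab G g)) <+: dst (w'.map (lab G' g')) := by
      refine (dst_prefix_mono ?_).trans hpre
      rw [hmapw]
      exact ⟨[lab G g u], rfl⟩
    obtain ⟨m, s', v', ρ', hrw', hm1, hm2, hv', hDlab, hdstp, hlabv, hstate⟩ := ih hpre₀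
    have hlastw : (w.map (lab G g)).getLast? = some (lab G g v) := by
      rw [List.getLast?_map, RW_walk_last h]; rfl
    rcases lab_cases hg v with hlv | ⟨i, hgi, hlvi⟩
    · -- v unmarked
      have hunmv : ∀ i', g i' ≠ v := (lab_eq_empty_iff g v).mp hlv
      rcases lab_cases hg u with hlu | ⟨j, hgj, hluj⟩
      · -- (d) u unmarked too: G' stays put
        have hunmu : ∀ i', g i' ≠ u := (lab_eq_empty_iff g u).mp hlu
        refine ⟨m, s', v', ρ', hrw', hm1, hm2, hv', ?_, ?_, ?_, ?_⟩
        · rw [hmapw, hlu, dst_snoc_eq (by rw [hlastw, hlv])]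
          exact hDlab
        · rw [projTrace_append]
          have hplast : (projTrace P G g ρ).getLast? =
              some (fun i' => Function.update (Function.update s v qv) u qu (g i')) := by
            rw [projTrace_getLast? g (RW_last h)]
            congr 1
            funext i'
            rw [Function.update_of_ne (hunmu i'), Function.update_of_ne (hunmv i')]
          rw [dst_snoc_eq hplast]
          exact hdstp
        · rw [hlu, ← hlabv]
          exact hlv.symm
        · intro i'
          rw [Function.update_of_ne (hunmu i'), Function.update_of_ne (hunmv i')]
          exact hstate i'
      · -- (c) v unmarked, u = g j marked: transport the token in G'
        have hlastw' : (w.map (lab G g)).getLast? = some ∅ := by rw [hlastw, hlv]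
        have hGnew : dst ((w ++ [u]).map (lab G g)) =
            dst (w.map (lab G g)) ++ [({j} : Finset (Fin k))] := by
          rw [hmapw, hluj]
          exact dst_snoc_ne hlastw' (Finset.singleton_ne_empty j).symm
        have hpre' : dst (w.map (lab G g)) ++ [({j} : Finset (Fin k))] <+:
            dst (w'.map (lab G' g')) := by
          rw [← hGnew]; exact hpre
        have hrcvj : P.δ (s u) Act.rcv qu := hrcv
        have hsj : s' (g' j) = s u := by
          rw [← (hstate j), hgj]
        obtain ⟨p, s'', ρ'', hA, hB, hC, hD', hE', hF, hG'⟩ :=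
          transport hg' hw' hrcvj hpre' w'.length m s' v' ρ' (by omega) hrw' hm1 hm2 hv'
            (by rw [← hlabv]; exact hlv) hDlab hsj
        have hfeq : (fun i' => s'' (g' i')) =
            (fun i' => Function.update (Function.update s v qv) u qu (g i')) := by
          funext i'
          rw [hG' i']
          by_cases hij : i' = j
          · subst hij
            rw [if_pos rfl, ← hgj, Function.update_self]
          · rw [if_neg hij,
              Function.update_of_ne (fun hh : g i' = u => hij (hg (hh.trans hgj.symm))),
              Function.update_of_ne (hunmv i')]
            exact (hstate i').symm
        refine ⟨p, s'', g' j, ρ'', hA, hB, hC, hD', ?_, ?_, ?_, ?_⟩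
        · rw [hGnew]; exact hE'
        · rw [projTrace_append, hF, hfeq]
          exact dst_congr_snoc hdstp _
        · rw [hluj, lab_apply hg' j]
        · intro i'
          exact (congrFun hfeq i').symm
    · -- v marked: v = g i, v' = g' i
      have hv'gi : g' i = v' := (lab_transfer hlabv i).mp hgi
      have hlabne : lab G g v ≠ lab G g u := by
        intro hh
        apply hvu
        have h2 : lab G g u = {i} := by rw [← hh]; exact hlvi
        exact hgi.symm.trans (lab_eq_singleton_imp h2)
      have hGnew : dst ((w ++ [u]).map (lab G g)) =
          dst (w.map (lab G g)) ++ [lab G g u] := by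
        rw [hmapw]
        exact dst_snoc_ne hlastw hlabne
      have hpre' : dst (w.map (lab G g)) ++ [lab G g u] <+: dst (w'.map (lab G' g')) := by
        rw [← hGnew]; exact hpre
      have hmlt : m < w'.length := by
        rcases lt_or_eq_of_le hm2 with hlt | heqm
        · exact hlt
        · exfalso
          rw [heqm, List.take_length] at hDlab
          have hle := hpre'.length_le
          rw [hDlab] at hle
          simp at hle
      obtain ⟨m₀, rfl⟩ : ∃ m₀, m = m₀ + 1 := ⟨m - 1, by omega⟩
      simp only [Nat.add_sub_cancel] at hv'
      have hv'get : w'[m₀] = v' := by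
        have hlt : m₀ < w'.length := by omega
        rw [List.getElem?_eq_getElem hlt] at hv'
        exact Option.some_inj.mp hv'
      set u' := w'[m₀ + 1] with hu'def
      have hedge : G'.E v' u' := by
        have := walk_edge hw' (m := m₀) hmlt
        rwa [hv'get] at this
      have hvu' : v' ≠ u' := fun hh => G'.no_self_loops u' (hh ▸ hedge)
      have htake : w'.take (m₀ + 1 + 1) = w'.take (m₀ + 1) ++ [u'] := by
        rw [← List.take_concat_get hmlt, List.concat_eq_append]
      have hmapsnoc : (w'.take (m₀ + 1 + 1)).map (lab G' g') =
          (w'.take (m₀ + 1)).map (lab G' g') ++ [lab G' g' u'] := by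
        rw [htake]; simp
      have hlastlab' :
          ((w'.take (m₀ + 1)).map (lab G' g')).getLast? = some (lab G' g' v') := by
        rw [List.getLast?_map, RW_walk_last hrw']; rfl
      have hl'v' : lab G' g' v' = {i} := by rw [← hlabv]; exact hlvi
      have hne2 : lab G' g' u' ≠ lab G' g' v' := by
        rw [hl'v']
        intro hh
        exact hvu' (hv'gi.symm.trans (lab_eq_singleton_imp hh))
      have hD1 : dst ((w'.take (m₀ + 1 + 1)).map (lab G' g')) =
          dst (w.map (lab G g)) ++ [lab G' g' u'] := by
        rw [hmapsnoc, dst_snoc_ne hlastlab' (fun hh => hne2 hh.symm), hDlab]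
      have hprefix1 : dst (w.map (lab G g)) ++ [lab G' g' u'] <+:
          dst (w'.map (lab G' g')) := by
        rw [← hD1]
        apply dst_prefix_mono
        rw [List.map_take]
        exact List.take_prefix _ _
      have hlabu' : lab G' g' u' = lab G g u := prefix_last_eq hprefix1 hpre'
      have hsv' : s' v' = s v := by
        rw [← hv'gi, ← hstate i, hgi]
      rcases lab_cases hg u with hlu | ⟨j, hgj, hluj⟩
      · -- (b) u unmarked: receive at the unmarked vertex u' of G'
        have hunmu : ∀ i', g i' ≠ u := (lab_eq_empty_iff g u).mp hlu
        have hu'unm : lab G' g' u' = ∅ := hlabu'.trans hlu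
        have hunmu' : ∀ i', g' i' ≠ u' := (lab_eq_empty_iff g' u').mp hu'unm
        have hntok : ¬ P.tok (s' u') := by
          rw [RW_tok_inv hrw' u']
          exact fun hh => hvu' hh.symm
        obtain ⟨r₁, r₂, hreR, hrcvu⟩ := can_rcv P hntok
        obtain ⟨ρ₂, hrw₂, hdst₂⟩ := RW_int_extend g' hrw' u' hunmu' hreR
        set s₂ := Function.update s' u' r₁ with hs₂
        have hsnd' : P.δ (s₂ v') Act.snd qv := by
          rw [hs₂, Function.update_of_ne hvu', hsv']
          exact hsnd
        have hrcv2 : P.δ (s₂ u') Act.rcv r₂ := by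
          rw [hs₂, Function.update_self]
          exact hrcvu
        have hrw₃ := RW.tok u' qv r₂ hrw₂ hedge hsnd' hrcv2
        rw [← htake] at hrw₃
        set s₃ := Function.update (Function.update s₂ v' qv) u' r₂ with hs₃
        have hfeq : (fun i' => s₃ (g' i')) =
            (fun i' => Function.update (Function.update s v qv) u qu (g i')) := by
          funext i'
          by_cases hii : i' = i
          · subst hii
            have hgiu : g i' ≠ u := fun hh => hvu (hgi.symm.trans hh)
            rw [hs₃, Function.update_of_ne (hunmu' i'), ← hv'gi, Function.update_self,
              Function.update_of_ne hgiu, hgi, Function.update_self]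
          · rw [hs₃, Function.update_of_ne (hunmu' i'),
              Function.update_of_ne (fun hh : g' i' = v' => hii (hg' (hh.trans hv'gi.symm))),
              hs₂, Function.update_of_ne (hunmu' i'),
              Function.update_of_ne (hunmu i'),
              Function.update_of_ne
                (fun hh : g i' = v => hii (hg (hh.trans hgi.symm)))]
            exact (hstate i').symm
        refine ⟨m₀ + 1 + 1, s₃, u', ρ₂ ++ [s₃], hrw₃, by omega, by omega, ?_, ?_, ?_, ?_, ?_⟩
        · simp only [Nat.add_sub_cancel]
          exact List.getElem?_eq_getElem hmlt
        · rw [hGnew, hD1, hlabu']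
        · rw [projTrace_append, projTrace_append, hfeq]
          exact dst_congr_snoc (hdst₂.trans hdstp) _
        · exact hlabu'.symm
        · intro i'
          exact (congrFun hfeq i').symm
      · -- (a) u = g j marked: direct token pass in G'
        have hu'gj : u' = g' j := by
          have h2 : lab G' g' u' = {j} := hlabu'.trans hluj
          exact (lab_eq_singleton_imp h2).symm
        have hsnd' : P.δ (s' v') Act.snd qv := by rw [hsv']; exact hsnd
        have hrcv' : P.δ (s' u') Act.rcv qu := by
          rw [hu'gj, ← hstate j, hgj]
          exact hrcv
        have hrw₃ := RW.tok u' qv qu hrw' hedge hsnd' hrcv'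
        rw [← htake] at hrw₃
        set s₃ := Function.update (Function.update s' v' qv) u' qu with hs₃
        have hij : i ≠ j := fun hh => hvu (hgi.symm.trans (hh ▸ hgj))
        have hfeq : (fun i' => s₃ (g' i')) =
            (fun i' => Function.update (Function.update s v qv) u qu (g i')) := by
          funext i'
          by_cases hjj : i' = j
          · subst hjj
            rw [hs₃, ← hu'gj, Function.update_self, hgj, Function.update_self]
          · by_cases hii : i' = i
            · subst hii
              have hgiu : g i' ≠ u := fun hh => hvu (hgi.symm.trans hh)
              have hgiu' : g' i' ≠ u' := by
                rw [hu'gj]; exact fun hh => hij (hg' hh)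
              rw [hs₃, Function.update_of_ne hgiu', ← hv'gi, Function.update_self,
                Function.update_of_ne hgiu, hgi, Function.update_self]
            · have h1 : g' i' ≠ u' := by
                rw [hu'gj]; exact fun hh => hjj (hg' hh)
              have h2 : g' i' ≠ v' := fun hh => hii (hg' (hh.trans hv'gi.symm))
              have h3 : g i' ≠ u := fun hh => hjj (hg (hh.trans hgj.symm))
              have h4 : g i' ≠ v := fun hh => hii (hg (hh.trans hgi.symm))
              rw [hs₃, Function.update_of_ne h1, Function.update_of_ne h2,
                Function.update_of_ne h3, Function.update_of_ne h4]
              exact (hstate i').symm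
        refine ⟨m₀ + 1 + 1, s₃, u', ρ' ++ [s₃], hrw₃, by omega, by omega, ?_, ?_, ?_, ?_, ?_⟩
        · simp only [Nat.add_sub_cancel]
          exact List.getElem?_eq_getElem hmlt
        · rw [hGnew, hD1, hlabu']
        · rw [projTrace_append, projTrace_append, hfeq]
          exact dst_congr_snoc hdstp _
        · exact hlabu'.symm
        · intro i'
          exact (congrFun hfeq i').symm
end Simulate


/-- One inclusion of the reduction theorem. -/
theorem reduction_incl {A : Type} {k : ℕ} (P : ProcTemplate A) (G G' : Topo)
    (x : G.V) (x' : G'.V)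
    (g : Fin k → G.V) (hg : Function.Injective g)
    (g' : Fin k → G'.V) (hg' : Function.Injective g')
    (hsub : ∀ l : List (Finset (Fin k)),
      (∃ w, IsWalkFrom G x w ∧ l = dst (w.map (lab G g))) →
      (∃ w', IsWalkFrom G' x' w' ∧ l = dst (w'.map (lab G' g')))) :
    { t : List (Fin k → P.Q) | ∃ ρ, IsFinRun P G x ρ ∧ t = dst (projTrace P G g ρ) } ⊆
    { t : List (Fin k → P.Q) | ∃ ρ', IsFinRun P G' x' ρ' ∧ t = dst (projTrace P G' g' ρ') } := by
  intro t ht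
  obtain ⟨ρ, hρ, rfl⟩ := ht
  obtain ⟨s, v, w, hrw⟩ := run_to_RW hρ
  obtain ⟨w', hw', heq⟩ := hsub _ ⟨w, RW_walk hrw, rfl⟩
  have hwx : IsWalkFrom G x [x] := ⟨List.cons_ne_nil _ _, rfl, List.isChain_singleton _⟩
  obtain ⟨w₀, hw₀, h0⟩ := hsub _ ⟨[x], hwx, rfl⟩
  have hxx' : lab G g x = lab G' g' x' := by
    have hh := congrArg List.head? h0
    rw [dst_head?, dst_head?, List.head?_map, List.head?_map, hw₀.2.1] at hh
    simp only [List.head?_cons, Option.map_some] at hh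
    exact Option.some_inj.mp hh
  obtain ⟨m, s', v', ρ', hrw', _, _, _, _, hdst, _, _⟩ :=
    simulate hg hg' hxx' hw' hrw (by rw [← heq])
  exact ⟨ρ', RW_run hrw', hdst.symm⟩


/-- finite-trace Reduction Theorem: if `G, ḡ` and `G', ḡ'`
realize the same set of destuttered label-sequences of walks from the initial
vertices, then for every process template `P` the systems `P^G` and `P^{G'}`
realize the same set of destuttered projection traces of finite runs. -/
theorem stmt16 {A : Type} [Fintype A] [Nonempty A] {k : ℕ}
    (G G' : Topo) (x : G.V) (x' : G'.V)
    (g : Fin k → G.V) (hg : Function.Injective g)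
    (g' : Fin k → G'.V) (hg' : Function.Injective g')
    (hwalks :
      { l : List (Finset (Fin k)) | ∃ w, IsWalkFrom G x w ∧ l = dst (w.map (lab G g)) } =
      { l : List (Finset (Fin k)) | ∃ w', IsWalkFrom G' x' w' ∧ l = dst (w'.map (lab G' g')) })
    (P : ProcTemplate A) :
    { t : List (Fin k → P.Q) | ∃ ρ, IsFinRun P G x ρ ∧ t = dst (projTrace P G g ρ) } =
    { t : List (Fin k → P.Q) | ∃ ρ', IsFinRun P G' x' ρ' ∧ t = dst (projTrace P G' g' ρ') } := by
  apply Set.eq_of_subset_of_subset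
  · exact reduction_incl P G G' x x' g hg g' hg'
      (fun l hl => (Set.ext_iff.mp hwalks l).mp hl)
  · exact reduction_incl P G' G x' x g' hg' g hg
      (fun l hl => (Set.ext_iff.mp hwalks l).mpr hl)
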